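/- Let x ∈ ℝ \ ℤ. Then 1/sin²(πx) = 1/(π²x²) + (2/π²)·Σ_{k=1}^∞ (x² + k²)/((x² − k²)²). -/

import Mathlib

open Real Filter Asymptotics MeasureTheory Set Topology

noncomputable def trigamma (y : ℝ) : ℝ := ∑' m : ℕ, 1 / (m + y)^2

noncomputable def psi2 (y : ℝ) : ℝ := -2 * ∑' m : ℕ, 1 / (m + y)^3


lemma coeff_val (x : ℝ) (hx : ∀ n : ℤ, x ≠ n) (n : ℤ) :
    haveI : Fact ((0:ℝ) < 1) := ⟨one_pos⟩
    fourierCoeff (AddCircle.liftIoc 1 0 (fun t : ℝ => Complex.exp (2*π*Complex.I*x*t))) n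
      = (Complex.exp (2*π*Complex.I*x) - 1) / (2*π*Complex.I*(x - n)) := by
  haveI : Fact ((0:ℝ) < 1) := ⟨one_pos⟩
  rw [fourierCoeff_liftIoc_eq, fourierCoeffOn_eq_integral]
  have hxn : (x:ℂ) - n ≠ 0 := by
    simpa [sub_eq_zero] using fun h => hx n (by exact_mod_cast h)
  have hc : (2*π*Complex.I*(x - n)) ≠ 0 := by
    simp [Real.pi_ne_zero, Complex.I_ne_zero, hxn, Complex.ofReal_ne_zero]
  have : ∀ t : ℝ, (fourier (-n) (t : AddCircle ((0:ℝ)+1-0))) • Complex.exp (2*π*Complex.I*x*t)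
      = Complex.exp ((2*π*Complex.I*(x - n)) * t) := by
    intro t
    rw [fourier_coe_apply, smul_eq_mul, ← Complex.exp_add]
    congr 1
    push_cast
    ring
  simp_rw [this]
  rw [integral_exp_mul_complex hc]
  have he : Complex.exp (2*↑π*Complex.I*(↑x - ↑n) * (1:ℝ)) = Complex.exp (2*π*Complex.I*x) := by
    rw [Complex.ofReal_one, mul_one, mul_sub, Complex.exp_sub,
      show (2*(π:ℂ)*Complex.I*(n:ℂ)) = (n:ℂ) * (2*π*Complex.I) by ring,
      Complex.exp_int_mul_two_pi_mul_I, div_one]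
  norm_num at he ⊢
  rw [he]

lemma int_sum (x : ℝ) (hx : ∀ n : ℤ, x ≠ n) :
    ∑' n : ℤ, (1:ℝ) / (x - n)^2 = π^2 / Real.sin (π*x)^2 := by
  haveI : Fact ((0:ℝ) < 1) := ⟨one_pos⟩
  set g : ℝ → ℂ := fun t : ℝ => Complex.exp (2*π*Complex.I*x*t) with hg
  set F : AddCircle (1:ℝ) → ℂ := AddCircle.liftIoc 1 0 g with hF
  have hFnorm : ∀ z, ‖F z‖ = 1 := by
    intro z
    rw [hF, AddCircle.liftIoc]
    simp only [Function.comp_apply, Set.restrict_apply, hg]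
    rw [Complex.norm_exp]
    norm_num [Complex.mul_re, Complex.I_re, Complex.I_im]
  have hFmeas : Measurable F := by
    have : Continuous (fun t : Set.Ioc (0:ℝ) (0+1) => g t) := by
      exact Complex.continuous_exp.comp (by fun_prop)
    exact this.measurable.comp (AddCircle.measurableEquivIoc 1 0).measurable
  have hmem : MemLp F 2 AddCircle.haarAddCircle := by
    refine (memLp_top_of_bound hFmeas.aestronglyMeasurable 1 (ae_of_all _ fun z => (hFnorm z).le)).mono_exponent le_top
  have hcoeff : ∀ n : ℤ, fourierCoeff (hmem.toLp F) n = fourierCoeff F n := by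
    intro n
    apply integral_congr_ae
    filter_upwards [hmem.coeFn_toLp] with t ht
    rw [ht]
  have hpars := tsum_sq_fourierCoeff (hmem.toLp F)
  have hsin : Real.sin (π*x) ≠ 0 := by
    rw [Real.sin_ne_zero_iff]
    intro n h
    exact hx n (mul_left_cancel₀ Real.pi_ne_zero (by linarith)).symm
  -- RHS of Parseval is 1
  have hrhs : ∫ t : AddCircle (1:ℝ), ‖(hmem.toLp F) t‖^2 ∂AddCircle.haarAddCircle = 1 := by
    rw [integral_congr_ae (g := fun _ => (1:ℝ)) ?_, integral_const]
    · simp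
    · filter_upwards [hmem.coeFn_toLp] with t ht
      rw [ht, hFnorm t, one_pow]
  -- LHS terms
  have hnum : ‖Complex.exp (2*π*Complex.I*x) - 1‖^2 = 4 * Real.sin (π*x)^2 := by
    rw [show (2*(π:ℂ)*Complex.I*x) = ((2*π*x:ℝ):ℂ)*Complex.I by push_cast; ring,
      Complex.exp_mul_I, Complex.sq_norm, Complex.normSq_apply]
    simp only [Complex.add_re, Complex.sub_re, Complex.add_im, Complex.sub_im,
      Complex.mul_re, Complex.mul_im, Complex.I_re, Complex.I_im, Complex.one_re,
      Complex.one_im, Complex.ofReal_cos, Complex.ofReal_sin]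
    rw [← Complex.ofReal_cos, ← Complex.ofReal_sin]
    simp only [Complex.ofReal_re, Complex.ofReal_im]
    have h1 := Real.sin_sq_add_cos_sq (2*π*x)
    have h2 := Real.sin_sq_eq_half_sub (π*x)
    rw [show 2*(π*x) = 2*π*x by ring] at h2
    nlinarith [h1, h2]
  have hterm : ∀ n : ℤ, ‖fourierCoeff (hmem.toLp F) n‖^2
      = (Real.sin (π*x)^2/π^2) * ((1:ℝ)/(x - n)^2) := by
    intro n
    rw [hcoeff n, hF, hg, coeff_val x hx n, norm_div, div_pow, hnum]
    have hden : ‖(2*(π:ℂ)*Complex.I*((x:ℂ) - n))‖^2 = 4*π^2*(x - (n:ℝ))^2 := by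
      rw [show (2*(π:ℂ)*Complex.I*((x:ℂ) - n)) = ((2*π:ℝ):ℂ) * Complex.I * ((x - (n:ℝ) : ℝ):ℂ)
        by push_cast; ring]
      simp only [norm_mul, Complex.norm_I, Complex.norm_real, Real.norm_eq_abs, mul_one]
      rw [mul_pow, mul_pow, sq_abs, sq_abs, sq_abs]
      ring
    rw [hden]
    have hxn : (x - (n:ℝ)) ≠ 0 := sub_ne_zero.mpr (hx n)
    have hπ := Real.pi_ne_zero
    field_simp
  rw [funext hterm] at hpars
  rw [hrhs, tsum_mul_left] at hpars
  have hs2 : Real.sin (π*x)^2 ≠ 0 := pow_ne_zero _ hsin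
  have hπ2 : (π:ℝ)^2 ≠ 0 := pow_ne_zero _ Real.pi_ne_zero
  field_simp at hpars ⊢
  linarith [hpars]


theorem stmt14 (x : ℝ) (hx : ∀ n : ℤ, x ≠ n) :
    1 / Real.sin (π*x)^2
      = 1/(π^2*x^2) + (2/π^2) * ∑' k : ℕ, (x^2 + (k+1:ℝ)^2)/((x^2 - (k+1:ℝ)^2)^2) := by
  set f : ℤ → ℝ := fun n => (1:ℝ) / (x - n)^2 with hf
  have hsum : Summable f := by
    have h := (Real.summable_one_div_int_add_rpow (-x) 2).mpr one_lt_two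
    apply h.congr
    intro n
    have habs : |(n:ℝ) + -x| ^ (2:ℝ) = (x - n)^2 := by
      rw [show (2:ℝ) = ((2:ℕ):ℝ) by norm_num, Real.rpow_natCast, sq_abs]
      ring
    simp only [hf, habs]
  have hpos : Summable (fun n : ℕ => f (n + 1)) :=
    hsum.comp_injective (fun a b h => by simp only at h; omega : Function.Injective (fun n : ℕ => (n:ℤ) + 1))
  have hneg : Summable (fun n : ℕ => f (-(n + 1))) :=
    hsum.comp_injective (fun a b h => by simp only at h; omega : Function.Injective (fun n : ℕ => -((n:ℤ) + 1)))
  have hsplit := tsum_of_add_one_of_neg_add_one hpos hneg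
  have hterm : ∀ k : ℕ, f (k + 1) + f (-(k + 1))
      = 2 * ((x^2 + (k+1:ℝ)^2)/((x^2 - (k+1:ℝ)^2)^2)) := by
    intro k
    have h1 : x - ((k:ℝ) + 1) ≠ 0 := sub_ne_zero.mpr (by exact_mod_cast hx ((k:ℤ)+1))
    have h2 : x + ((k:ℝ) + 1) ≠ 0 := by
      intro h
      exact hx (-((k:ℤ)+1)) (by push_cast; linarith)
    rw [hf]
    simp only
    push_cast
    rw [show x - -((k:ℝ)+1) = x + ((k:ℝ)+1) by ring]
    have h3 : x^2 - ((k:ℝ)+1)^2 ≠ 0 := by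
      have := mul_ne_zero h1 h2
      intro h
      apply this
      nlinarith [h]
    rw [div_add_div _ _ (pow_ne_zero 2 h1) (pow_ne_zero 2 h2)]
    rw [show 2 * ((x^2 + ((k:ℝ)+1)^2)/((x^2 - ((k:ℝ)+1)^2)^2))
        = (2 * (x^2 + ((k:ℝ)+1)^2))/((x^2 - ((k:ℝ)+1)^2)^2) by rw [mul_div_assoc']]
    rw [div_eq_div_iff (mul_ne_zero (pow_ne_zero 2 h1) (pow_ne_zero 2 h2)) (pow_ne_zero 2 h3)]
    ring
  have hcomb : (∑' n : ℕ, f (n + 1)) + ∑' n : ℕ, f (-(n + 1))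
      = 2 * ∑' k : ℕ, (x^2 + (k+1:ℝ)^2)/((x^2 - (k+1:ℝ)^2)^2) := by
    rw [← Summable.tsum_add hpos hneg, ← tsum_mul_left]
    exact tsum_congr hterm
  have hZ := int_sum x hx
  have hx0 : x ≠ 0 := by simpa using hx 0
  have hf0 : f 0 = 1/x^2 := by simp [hf]
  have hπ := Real.pi_ne_zero
  have hsin : Real.sin (π*x) ≠ 0 := by
    rw [Real.sin_ne_zero_iff]
    intro n h
    exact hx n (mul_left_cancel₀ Real.pi_ne_zero (by linarith)).symm
  have hπ2 : (π:ℝ)^2 ≠ 0 := pow_ne_zero _ hπ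
  have hs2 : Real.sin (π*x)^2 ≠ 0 := pow_ne_zero _ hsin
  have key : π^2 / Real.sin (π*x)^2
      = 2 * (∑' k : ℕ, (x^2 + (k+1:ℝ)^2)/((x^2 - (k+1:ℝ)^2)^2)) + 1/x^2 := by
    rw [← hZ, hsplit, hf0]
    linarith [hcomb]
  calc 1 / Real.sin (π*x)^2 = (π^2 / Real.sin (π*x)^2)/π^2 := by
        field_simp
    _ = (2 * (∑' k : ℕ, (x^2 + (k+1:ℝ)^2)/((x^2 - (k+1:ℝ)^2)^2)) + 1/x^2)/π^2 := by
        rw [key]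
    _ = 1/(π^2*x^2) + (2/π^2) * ∑' k : ℕ, (x^2 + (k+1:ℝ)^2)/((x^2 - (k+1:ℝ)^2)^2) := by
        field_simp
        ring
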